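/- The pair (U₁, V₁) satisfies the Weyl commutation relation U₁(θ) ∘ V₁^ℓ = exp(2 i ℓ θ) • (V₁^ℓ ∘ U₁(θ)) for every θ ∈ ℝ and ℓ ∈ ℤ, where V₁ := V² and V₁^ℓ denotes the ℤ-power of the unitary V₁. -/

import Mathlib

open Complex

noncomputable section

/-- The Hilbert space `H := ℓ²(ℤ, ℂ)`. -/
abbrev H : Type := lp (fun _ : ℤ => ℂ) 2

/-- The orthonormal basis vectors `e ℓ = lp.single 2 ℓ 1`. -/
def e (ℓ : ℤ) : H := lp.single 2 ℓ 1

/-- `U₁(θ) := exp(−iθ/2) • (cos(θ/2) • U(θ) + (i·sin(θ/2)) • U(θ+π))`. -/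
def U₁ (U : ℝ → (H →L[ℂ] H)) (θ : ℝ) : H →L[ℂ] H :=
  Complex.exp (-Complex.I * θ / 2) •
    ((Real.cos (θ / 2) : ℂ) • U θ + (Complex.I * Real.sin (θ / 2)) • U (θ + Real.pi))

/-- Two continuous linear maps on `H` agreeing on all basis vectors `e m` are equal. -/
lemma ext_e {T S : H →L[ℂ] H} (h : ∀ m : ℤ, T (e m) = S (e m)) : T = S := by
  refine ContinuousLinearMap.ext fun f => ?_
  have hf := lp.hasSum_single (E := fun _ : ℤ => ℂ) (p := 2) (by norm_num) f
  have key : ∀ i : ℤ, T (lp.single 2 i (f i)) = S (lp.single 2 i (f i)) := by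
    intro i
    have : lp.single (E := fun _ : ℤ => ℂ) 2 i (f i) = (f i) • e i := by
      rw [e, ← lp.single_smul]; norm_num
    rw [this, map_smul, map_smul, h i]
  have hT : HasSum (fun i : ℤ => T (lp.single 2 i (f i))) (T f) := hf.mapL T
  have hS : HasSum (fun i : ℤ => T (lp.single 2 i (f i))) (S f) := by
    have := hf.mapL S
    simpa [key] using this
  exact hT.unique hS

/-- **Weyl relation for the commutant pair.** With `V₁ := V²`, the pair `(U₁, V₁)`
satisfies `U₁(θ) ∘ V₁^ℓ = exp(2iℓθ) • (V₁^ℓ ∘ U₁(θ))` for all `θ : ℝ`, `ℓ : ℤ`,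
where `V₁ ^ ℓ` is the `ℤ`-power of the unitary `V₁`. -/
theorem U₁_V₁_weyl_commutation
    (U : ℝ → (H →L[ℂ] H)) (V : unitary (H →L[ℂ] H))
    (hU : ∀ (θ : ℝ) (ℓ : ℤ), U θ (e ℓ) = Complex.exp (Complex.I * ℓ * θ) • e ℓ)
    (hV : ∀ ℓ : ℤ, (V : H →L[ℂ] H) (e ℓ) = e (ℓ + 1)) :
    ∀ (θ : ℝ) (ℓ : ℤ),
      U₁ U θ ∘L (((V ^ 2 : unitary (H →L[ℂ] H)) ^ ℓ : unitary (H →L[ℂ] H)) : H →L[ℂ] H) =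
        Complex.exp (2 * Complex.I * ℓ * θ) •
          ((((V ^ 2 : unitary (H →L[ℂ] H)) ^ ℓ : unitary (H →L[ℂ] H)) : H →L[ℂ] H) ∘L U₁ U θ) := by
  set W : unitary (H →L[ℂ] H) := V ^ 2 with hW
  -- action of W
  have hWact : ∀ m : ℤ, (W : H →L[ℂ] H) (e m) = e (m + 2) := by
    intro m
    have : (W : H →L[ℂ] H) = (V : H →L[ℂ] H) * (V : H →L[ℂ] H) := by
      rw [hW, pow_two]; rfl
    rw [this, ContinuousLinearMap.mul_apply, hV, hV]
    ring_nf
  have hWinv : ∀ m : ℤ, ((W⁻¹ : unitary (H →L[ℂ] H)) : H →L[ℂ] H) (e m) = e (m - 2) := by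
    intro m
    have h1 : ((W⁻¹ : unitary (H →L[ℂ] H)) : H →L[ℂ] H) ((W : H →L[ℂ] H) (e (m - 2)))
        = e (m - 2) := by
      rw [← ContinuousLinearMap.mul_apply, ← Submonoid.coe_mul, inv_mul_cancel]
      rfl
    rw [hWact] at h1
    simpa using h1
  have hWpow : ∀ (ℓ m : ℤ), (((W ^ ℓ : unitary (H →L[ℂ] H))) : H →L[ℂ] H) (e m)
      = e (m + 2 * ℓ) := by
    intro ℓ
    induction ℓ using Int.induction_on with
    | zero => intro m; rw [zpow_zero, OneMemClass.coe_one, ContinuousLinearMap.one_apply, mul_zero, add_zero]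
    | succ k ih =>
        intro m
        have : W ^ ((k : ℤ) + 1) = W ^ (k : ℤ) * W := zpow_add_one W k
        rw [this, Submonoid.coe_mul, ContinuousLinearMap.mul_apply, hWact, ih]
        ring_nf
    | pred k ih =>
        intro m
        have : W ^ (-(k : ℤ) - 1) = W ^ (-(k : ℤ)) * W⁻¹ := zpow_sub_one W (-k)
        rw [this, Submonoid.coe_mul, ContinuousLinearMap.mul_apply, hWinv, ih]
        ring_nf
  -- action of U₁
  have hU₁ : ∀ (θ : ℝ) (m : ℤ), U₁ U θ (e m)
      = (Complex.exp (-Complex.I * θ / 2) *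
          ((Real.cos (θ / 2) : ℂ) * Complex.exp (Complex.I * m * θ) +
            Complex.I * Real.sin (θ / 2) * Complex.exp (Complex.I * m * (θ + Real.pi)))) • e m := by
    intro θ m
    simp only [U₁, ContinuousLinearMap.smul_apply, ContinuousLinearMap.add_apply, hU,
      smul_smul, ← add_smul, Complex.ofReal_add]
  intro θ ℓ
  refine ext_e fun m => ?_
  have hcast : ((m + 2 * ℓ : ℤ) : ℂ) = (m : ℂ) + 2 * ℓ := by push_cast; ring
  have hkey1 : Complex.exp (Complex.I * ((m : ℂ) + 2 * ℓ) * θ)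
      = Complex.exp (2 * Complex.I * ℓ * θ) * Complex.exp (Complex.I * m * θ) := by
    rw [← Complex.exp_add]; ring_nf
  have hkey2 : Complex.exp (Complex.I * ((m : ℂ) + 2 * ℓ) * (θ + Real.pi))
      = Complex.exp (2 * Complex.I * ℓ * θ) * Complex.exp (Complex.I * m * (θ + Real.pi)) := by
    have h1 : Complex.exp (Complex.I * ((m : ℂ) + 2 * ℓ) * (θ + Real.pi))
        = Complex.exp (2 * Complex.I * ℓ * θ) * Complex.exp (Complex.I * m * (θ + Real.pi)) *
          Complex.exp ((ℓ : ℂ) * (2 * Real.pi * Complex.I)) := by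
      rw [← Complex.exp_add, ← Complex.exp_add]; ring_nf
    rw [h1, Complex.exp_int_mul_two_pi_mul_I, mul_one]
  simp only [ContinuousLinearMap.comp_apply, ContinuousLinearMap.smul_apply, hWpow, hU₁,
    map_smul, hWpow, smul_smul, hcast, hkey1, hkey2]
  congr 1
  ring
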